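/- arXiv:2206.12721 — 2 statements merged into one kernel-verified Lean document; each statement's English description precedes it below -/
import Mathlib

section
/- If f : [0,1] → [0,1] is regulated with Riemann integral ∫₀¹ f(x) dx = 0, then there exists x ∈ [0,1] with f(x) = 0. -/
open Filter Topology Set intervalIntegral MeasureTheory

private lemma shrink_aux {f : ℝ → ℝ} {l : Filter ℝ} [l.NeBot] {L c ε : ℝ}
    (hL : Tendsto f l (𝓝 L)) (h : ∀ᶠ t in l, |f t - c| ≤ ε) : |L - c| ≤ ε :=
  le_of_tendsto ((hL.sub_const c).abs) h

private lemma fin_aux (f g : ℝ → ℝ) (D : Set ℝ) (hD : D ⊆ Icc (0:ℝ) 1)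
    (l : ℝ → Filter ℝ)
    (hne : ∀ x ∈ D, (l x).NeBot)
    (hg : ∀ x ∈ D, Tendsto f (l x) (𝓝 (g x)))
    (hmem : ∀ a b x : ℝ, a < x → x < b → Ioo a b ∈ l x)
    (hr : ∀ x ∈ Ico (0:ℝ) 1, ∃ L : ℝ, Tendsto f (𝓝[>] x) (𝓝 L))
    (hl : ∀ x ∈ Ioc (0:ℝ) 1, ∃ L : ℝ, Tendsto f (𝓝[<] x) (𝓝 L))
    {ε : ℝ} (hε : 0 < ε) :
    {x | x ∈ D ∧ ε ≤ |f x - g x|}.Finite := by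
  by_contra hfin
  obtain ⟨y, hyK, hacc⟩ :=
    Set.Infinite.exists_accPt_of_subset_isCompact hfin isCompact_Icc
      (fun x hx => hD hx.1)
  have hfreq : ∃ᶠ z in 𝓝[≠] y, z ∈ {x | x ∈ D ∧ ε ≤ |f x - g x|} :=
    frequently_mem_iff_neBot.mpr hacc
  rw [← nhdsLT_sup_nhdsGT y, frequently_sup] at hfreq
  rcases hfreq with hfl | hfr
  · -- accumulation from the left
    obtain ⟨z, hzS, hzy⟩ := (hfl.and_eventually eventually_mem_nhdsWithin).exists
    have hy0 : 0 < y := lt_of_le_of_lt (hD hzS.1).1 hzy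
    obtain ⟨L, hL⟩ := hl y ⟨hy0, hyK.2⟩
    have hev : {t | |f t - L| ≤ ε/4} ∈ 𝓝[<] y := by
      filter_upwards [hL.eventually (Metric.closedBall_mem_nhds (ε := ε/4) L (by positivity))] with t ht
      simpa [Real.dist_eq] using ht
    obtain ⟨a, ha, hasub⟩ := (mem_nhdsLT_iff_exists_Ioo_subset' hy0).mp hev
    obtain ⟨x, hxS, hxI⟩ :=
      (hfl.and_eventually (Ioo_mem_nhdsLT_of_mem (⟨ha, le_rfl⟩ : y ∈ Ioc a y))).exists
    haveI := hne x hxS.1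
    have h1 : |f x - L| ≤ ε/4 := hasub hxI
    have h2 : |g x - L| ≤ ε/4 :=
      shrink_aux (hg x hxS.1)
        (Filter.eventually_of_mem (hmem a y x hxI.1 hxI.2) (fun t ht => hasub ht))
    have h3 : ε ≤ |f x - g x| := hxS.2
    have h4 : |f x - g x| ≤ |f x - L| + |g x - L| := by
      rw [abs_sub_comm (g x) L]; exact abs_sub_le (f x) L (g x)
    linarith
  · -- accumulation from the right
    obtain ⟨z, hzS, hzy⟩ := (hfr.and_eventually eventually_mem_nhdsWithin).exists
    have hy1 : y < 1 := lt_of_lt_of_le hzy (hD hzS.1).2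
    obtain ⟨L, hL⟩ := hr y ⟨hyK.1, hy1⟩
    have hev : {t | |f t - L| ≤ ε/4} ∈ 𝓝[>] y := by
      filter_upwards [hL.eventually (Metric.closedBall_mem_nhds (ε := ε/4) L (by positivity))] with t ht
      simpa [Real.dist_eq] using ht
    obtain ⟨b, hb, hbsub⟩ := (mem_nhdsGT_iff_exists_Ioo_subset' hy1).mp hev
    obtain ⟨x, hxS, hxI⟩ :=
      (hfr.and_eventually (Ioo_mem_nhdsGT_of_mem (⟨le_rfl, hb⟩ : y ∈ Ico y b))).exists
    haveI := hne x hxS.1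
    have h1 : |f x - L| ≤ ε/4 := hbsub hxI
    have h2 : |g x - L| ≤ ε/4 :=
      shrink_aux (hg x hxS.1)
        (Filter.eventually_of_mem (hmem y b x hxI.1 hxI.2) (fun t ht => hbsub ht))
    have h3 : ε ≤ |f x - g x| := hxS.2
    have h4 : |f x - g x| ≤ |f x - L| + |g x - L| := by
      rw [abs_sub_comm (g x) L]; exact abs_sub_le (f x) L (g x)
    linarith

theorem regulated_integral_zero_has_zero (f : ℝ → ℝ)
    (hmap : ∀ x ∈ Icc (0:ℝ) 1, f x ∈ Icc (0:ℝ) 1)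
    (hr : ∀ x ∈ Ico (0:ℝ) 1, ∃ L : ℝ, Tendsto f (𝓝[>] x) (𝓝 L))
    (hl : ∀ x ∈ Ioc (0:ℝ) 1, ∃ L : ℝ, Tendsto f (𝓝[<] x) (𝓝 L))
    (hint : (∫ x in (0:ℝ)..1, f x) = 0) :
    ∃ x ∈ Icc (0:ℝ) 1, f x = 0 := by
  classical
  -- choose right/left limit functions
  set R : ℝ → ℝ := fun x => if h : x ∈ Ico (0:ℝ) 1 then (hr x h).choose else f x with hRdef
  have hR : ∀ x ∈ Ico (0:ℝ) 1, Tendsto f (𝓝[>] x) (𝓝 (R x)) := by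
    intro x hx
    simp only [hRdef, dif_pos hx]
    exact (hr x hx).choose_spec
  set Lf : ℝ → ℝ := fun x => if h : x ∈ Ioc (0:ℝ) 1 then (hl x h).choose else f x with hLdef
  have hLf : ∀ x ∈ Ioc (0:ℝ) 1, Tendsto f (𝓝[<] x) (𝓝 (Lf x)) := by
    intro x hx
    simp only [hLdef, dif_pos hx]
    exact (hl x hx).choose_spec
  -- the two bad sets are countable
  have hNR : {x | x ∈ Ico (0:ℝ) 1 ∧ f x ≠ R x}.Countable := by
    have hsub : {x | x ∈ Ico (0:ℝ) 1 ∧ f x ≠ R x} ⊆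
        ⋃ n : ℕ, {x | x ∈ Ico (0:ℝ) 1 ∧ (1:ℝ)/(n+1) ≤ |f x - R x|} := by
      intro x hx
      have hpos : 0 < |f x - R x| := abs_pos.mpr (sub_ne_zero.mpr hx.2)
      obtain ⟨n, hn⟩ := exists_nat_one_div_lt hpos
      exact mem_iUnion.mpr ⟨n, hx.1, hn.le⟩
    refine Set.Countable.mono hsub (countable_iUnion fun n => ?_)
    refine (fin_aux f R (Ico 0 1) Ico_subset_Icc_self (fun x => 𝓝[>] x)
      (fun x _ => nhdsGT_neBot x) hR ?_ hr hl (by positivity)).countable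
    intro a b x hax hxb
    exact mem_of_superset (Ioo_mem_nhdsGT hxb)
      (fun t ht => ⟨hax.trans ht.1, ht.2⟩)
  have hNL : {x | x ∈ Ioc (0:ℝ) 1 ∧ f x ≠ Lf x}.Countable := by
    have hsub : {x | x ∈ Ioc (0:ℝ) 1 ∧ f x ≠ Lf x} ⊆
        ⋃ n : ℕ, {x | x ∈ Ioc (0:ℝ) 1 ∧ (1:ℝ)/(n+1) ≤ |f x - Lf x|} := by
      intro x hx
      have hpos : 0 < |f x - Lf x| := abs_pos.mpr (sub_ne_zero.mpr hx.2)
      obtain ⟨n, hn⟩ := exists_nat_one_div_lt hpos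
      exact mem_iUnion.mpr ⟨n, hx.1, hn.le⟩
    refine Set.Countable.mono hsub (countable_iUnion fun n => ?_)
    refine (fin_aux f Lf (Ioc 0 1) Ioc_subset_Icc_self (fun x => 𝓝[<] x)
      (fun x _ => nhdsLT_neBot x) hLf ?_ hr hl (by positivity)).countable
    intro a b x hax hxb
    exact mem_of_superset (Ioo_mem_nhdsLT hax)
      (fun t ht => ⟨ht.1, ht.2.trans hxb⟩)
  set N : Set ℝ := {x | x ∈ Ico (0:ℝ) 1 ∧ f x ≠ R x} ∪ {x | x ∈ Ioc (0:ℝ) 1 ∧ f x ≠ Lf x}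
    with hNdef
  have hNc : N.Countable := hNR.union hNL
  set T : Set ℝ := Icc 0 1 \ N with hTdef
  -- f is continuous on T
  have hcont : ContinuousOn f T := by
    intro x hx
    refine ContinuousWithinAt.mono ?_ (diff_subset : T ⊆ Icc 0 1)
    have hsplit : Icc (0:ℝ) 1 ⊆
        (Icc 0 1 ∩ Iio x) ∪ ({x} ∪ (Icc 0 1 ∩ Ioi x)) := by
      intro t ht
      rcases lt_trichotomy t x with h | h | h
      · exact Or.inl ⟨ht, h⟩
      · exact Or.inr (Or.inl h)
      · exact Or.inr (Or.inr ⟨ht, h⟩)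
    have hle : 𝓝[Icc (0:ℝ) 1] x ≤
        𝓝[Icc 0 1 ∩ Iio x] x ⊔ (𝓝[{x}] x ⊔ 𝓝[Icc 0 1 ∩ Ioi x] x) := by
      calc 𝓝[Icc (0:ℝ) 1] x ≤ 𝓝[(Icc 0 1 ∩ Iio x) ∪ ({x} ∪ (Icc 0 1 ∩ Ioi x))] x :=
            nhdsWithin_mono x hsplit
        _ = _ := by rw [nhdsWithin_union, nhdsWithin_union]
    refine Tendsto.mono_left ?_ hle
    rw [tendsto_sup, tendsto_sup]
    refine ⟨?_, ?_, ?_⟩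
    · -- left part
      rcases eq_or_lt_of_le hx.1.1 with h0 | h0
      · have : Icc (0:ℝ) 1 ∩ Iio x = ∅ := by
          ext t
          simp only [mem_inter_iff, mem_Icc, mem_Iio, mem_empty_iff_false, iff_false]
          rintro ⟨⟨ht0, _⟩, htx⟩
          linarith
        rw [this, nhdsWithin_empty]
        exact tendsto_bot
      · have hxmem : x ∈ Ioc (0:ℝ) 1 := ⟨h0, hx.1.2⟩
        have hfx : f x = Lf x := by
          by_contra hne
          exact hx.2 (Or.inr ⟨hxmem, hne⟩)
        rw [hfx]
        exact (hLf x hxmem).mono_left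
          (nhdsWithin_mono x (inter_subset_right))
    · -- the point itself
      rw [nhdsWithin_singleton]
      exact tendsto_pure_nhds f x
    · -- right part
      rcases eq_or_lt_of_le hx.1.2 with h1 | h1
      · have : Icc (0:ℝ) 1 ∩ Ioi x = ∅ := by
          ext t
          simp only [mem_inter_iff, mem_Icc, mem_Ioi, mem_empty_iff_false, iff_false]
          rintro ⟨⟨_, ht1⟩, hxt⟩
          linarith
        rw [this, nhdsWithin_empty]
        exact tendsto_bot
      · have hxmem : x ∈ Ico (0:ℝ) 1 := ⟨hx.1.1, h1⟩
        have hfx : f x = R x := by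
          by_contra hne
          exact hx.2 (Or.inl ⟨hxmem, hne⟩)
        rw [hfx]
        exact (hR x hxmem).mono_left
          (nhdsWithin_mono x (inter_subset_right))
  -- measure-theoretic conclusion
  have hTm : MeasurableSet T := measurableSet_Icc.diff hNc.measurableSet
  have haem : AEMeasurable f (volume.restrict T) := hcont.aemeasurable hTm
  have hTrestrict : volume.restrict T = volume.restrict (Ioc (0:ℝ) 1) := by
    have h1 : T =ᵐ[volume] Icc (0:ℝ) 1 :=
      MeasureTheory.diff_ae_eq_self.mpr (measure_mono_null inter_subset_right
        (hNc.measure_zero _))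
    have h2 : Icc (0:ℝ) 1 =ᵐ[volume] Ioc (0:ℝ) 1 := Ioc_ae_eq_Icc.symm
    rw [Measure.restrict_congr_set (h1.trans h2)]
  rw [hTrestrict] at haem
  have hbound : ∀ᵐ x ∂(volume.restrict (Ioc (0:ℝ) 1)), ‖f x‖ ≤ 1 := by
    rw [MeasureTheory.ae_restrict_iff' measurableSet_Ioc]
    refine Filter.Eventually.of_forall fun x hx => ?_
    have := hmap x (Ioc_subset_Icc_self hx)
    rw [Real.norm_eq_abs, abs_le]
    constructor <;> linarith [this.1, this.2]
  have hInt : MeasureTheory.IntegrableOn f (Ioc (0:ℝ) 1) volume :=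
    ⟨haem.aestronglyMeasurable, MeasureTheory.HasFiniteIntegral.of_bounded hbound⟩
  have h0le : 0 ≤ᵐ[volume.restrict (Ioc (0:ℝ) 1)] f := by
    filter_upwards [MeasureTheory.ae_restrict_mem measurableSet_Ioc] with x hx
    exact (hmap x (Ioc_subset_Icc_self hx)).1
  rw [intervalIntegral.integral_of_le zero_le_one] at hint
  have hzero : f =ᵐ[volume.restrict (Ioc (0:ℝ) 1)] 0 :=
    (MeasureTheory.integral_eq_zero_iff_of_nonneg_ae h0le hInt).mp hint
  haveI : (MeasureTheory.ae (volume.restrict (Ioc (0:ℝ) 1))).NeBot := by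
    refine MeasureTheory.ae_neBot.mpr ?_
    intro h
    have := congrArg (fun μ => μ (Ioc (0:ℝ) 1)) h
    simp [Real.volume_Ioc] at this
  obtain ⟨x, hfx, hx⟩ :=
    (hzero.and (MeasureTheory.ae_restrict_mem measurableSet_Ioc)).exists
  exact ⟨x, Ioc_subset_Icc_self hx, hfx⟩
end

section
/- For any f : ℝ → ℝ, the set of points that are strict local maxima of f is countable. -/
theorem strict_local_maxima_countable (f : ℝ → ℝ) :
    {x : ℝ | ∃ ε > (0:ℝ), ∀ y : ℝ, y ≠ x → |y - x| < ε → f y < f x}.Countable := by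
  have key : ∀ x ∈ {x : ℝ | ∃ ε > (0:ℝ), ∀ y : ℝ, y ≠ x → |y - x| < ε → f y < f x},
      ∃ pq : ℚ × ℚ, (pq.1 : ℝ) < x ∧ x < pq.2 ∧
        ∀ y : ℝ, (pq.1 : ℝ) < y → y < pq.2 → y ≠ x → f y < f x := by
    rintro x ⟨ε, hε, h⟩
    obtain ⟨p, hp1, hp2⟩ := exists_rat_btwn (show x - ε < x by linarith)
    obtain ⟨q, hq1, hq2⟩ := exists_rat_btwn (show x < x + ε by linarith)
    refine ⟨(p, q), hp2, hq1, fun y h1 h2 hy => h y hy ?_⟩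
    rw [abs_sub_lt_iff]
    constructor <;> linarith
  choose! F hF1 hF2 hF3 using key
  apply Set.countable_of_injective_of_countable_image (f := F)
  · rintro x hx y hy hxy
    by_contra hne
    have h1 := hF3 x hx y (by rw [hxy]; exact hF1 y hy) (by rw [hxy]; exact hF2 y hy)
      (Ne.symm hne)
    have h2 := hF3 y hy x (by rw [← hxy]; exact hF1 x hx) (by rw [← hxy]; exact hF2 x hx) hne
    linarith
  · exact Set.to_countable _
end
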